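/- Let N ≥ 1, l ≥ 1, and let g be an (Nl)×(Nl) complex matrix which is block tridiagonal with l×l blocks: writing each index α ∈ {1,…,Nl} as α = p(α)l + q(α) with p(α) ∈ {0,…,N−1}, q(α) ∈ {1,…,l}, assume g(α,α') = 0 whenever |p(α)−p(α')| ≥ 2. Fix α, α' ∈ {1,…,Nl} and let P*_{α'→α} be the set of sequences γ = (r₁,…,r_s), 1 ≤ s ≤ Nl, of elements of {1,…,Nl} with r₁ = α', r_s = α, interior entries r₂,…,r_{s−1} pairwise distinct and distinct from r₁ and r_s, and g(r_i, r_{i+1}) ≠ 0 for all 1 ≤ i ≤ s−1. For such γ let b(γ) = #{1 ≤ i ≤ s−1 : |p(r_i) − p(r_{i+1})| = 1}. Then: (a) every γ ∈ P*_{α'→α} satisfies |p(α) − p(α')| ≤ b(γ) ≤ Nl; and (b) the cardinality of P*_{α'→α} is at most (3l)^{Nl}. -/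

import Mathlib

noncomputable section

open Matrix
open scoped Classical

/-- Encoding of paths `γ = (r₁, …, r_s)` with `1 ≤ s ≤ M` and entries in
`Fin M`: a pair of `k : Fin M` (so that `s = k + 1`) and a function
`r : Fin (k+1) → Fin M` listing the entries. -/
abbrev PathIdx (M : ℕ) := Σ k : Fin M, Fin (k.1 + 1) → Fin M

/-- The site coordinate `p(α) = α / l` of an index `α`, as an integer. -/
def siteOf (l : ℕ) {M : ℕ} (a : Fin M) : ℤ := ((a.1 / l : ℕ) : ℤ)

/-- `γ ∈ P*_{α'→α}`: the first entry is `α'`, the last is `α`, the interior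
entries are pairwise distinct and distinct from both endpoints, and all steps of
the path use nonzero entries of `g`. -/
def IsStarPath {M : ℕ} (g : Matrix (Fin M) (Fin M) ℂ) (α α' : Fin M)
    (γ : PathIdx M) : Prop :=
  γ.2 ⟨0, Nat.succ_pos _⟩ = α' ∧ γ.2 (Fin.last γ.1.1) = α ∧
    (∀ i j : Fin (γ.1.1 + 1), i ≠ j → i ≠ ⟨0, Nat.succ_pos _⟩ →
      i ≠ Fin.last γ.1.1 → γ.2 i ≠ γ.2 j) ∧
    ∀ i : Fin γ.1.1, g (γ.2 i.castSucc) (γ.2 i.succ) ≠ 0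

/-- `b(γ)`: the number of steps of `γ` between neighbouring blocks, i.e. the
number of `i` with `|p(r_i) - p(r_{i+1})| = 1`. -/
def bval (l : ℕ) {M : ℕ} (γ : PathIdx M) : ℕ :=
  (Finset.univ.filter fun i : Fin γ.1.1 =>
    |siteOf l (γ.2 i.castSucc) - siteOf l (γ.2 i.succ)| = 1).card

lemma tele (k : ℕ) (f : Fin (k+1) → ℤ) :
    ∑ i : Fin k, (f i.succ - f i.castSucc) = f (Fin.last k) - f 0 := by
  induction k with
  | zero => simp
  | succ k ih =>
    rw [Fin.sum_univ_castSucc]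
    have h := ih (fun i => f i.castSucc)
    simp only [Fin.succ_castSucc] at h ⊢
    rw [h, Fin.succ_last]
    simp

lemma geom (c n : ℕ) (hc : 2 ≤ c) : ∑ k ∈ Finset.range n, c ^ k ≤ c ^ n := by
  induction n with
  | zero => simp
  | succ n ih =>
    rw [Finset.sum_range_succ, pow_succ]
    nlinarith [pow_pos (show 0 < c by omega) n]

lemma code_bounds {l M : ℕ} (hl : 1 ≤ l) {a b : Fin M}
    (h : |siteOf l a - siteOf l b| ≤ 1) :
    a.1 / l * l ≤ b.1 + l ∧ b.1 + l < a.1 / l * l + 3 * l := by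
  rw [siteOf, siteOf, abs_le] at h
  have hab1 : a.1 / l ≤ b.1 / l + 1 := by have := h.2; omega
  have hab2 : b.1 / l ≤ a.1 / l + 1 := by have := h.1; omega
  clear h
  have h1 : b.1 / l * l + b.1 % l = b.1 := Nat.div_add_mod' b.1 l
  have h2 : b.1 % l < l := Nat.mod_lt _ (by omega)
  set pa := a.1 / l with hpa
  set pb := b.1 / l with hpb
  clear_value pa pb
  have h3 : pa * l ≤ (pb + 1) * l := Nat.mul_le_mul_right _ hab1
  have h4 : pb * l ≤ (pa + 1) * l := Nat.mul_le_mul_right _ hab2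
  rw [add_mul, one_mul] at h3 h4
  omega

/-- for a block tridiagonal `(Nl)×(Nl)` matrix `g` (blocks of
size `l`, site coordinate `p(α) = α / l`) and any `α, α'`:
(a) every `γ ∈ P*_{α'→α}` satisfies `|p(α) - p(α')| ≤ b(γ) ≤ Nl`; and
(b) `#P*_{α'→α} ≤ (3l)^{Nl}`. -/
theorem statement17 (N l : ℕ) (hN : 1 ≤ N) (hl : 1 ≤ l)
    (g : Matrix (Fin (N * l)) (Fin (N * l)) ℂ)
    (htri : ∀ a b : Fin (N * l), 2 ≤ |siteOf l a - siteOf l b| → g a b = 0)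
    (α α' : Fin (N * l)) :
    (∀ γ ∈ Finset.univ.filter (fun γ : PathIdx (N * l) => IsStarPath g α α' γ),
        |siteOf l α - siteOf l α'| ≤ (bval l γ : ℤ) ∧ (bval l γ : ℤ) ≤ (N * l : ℤ)) ∧
      (Finset.univ.filter (fun γ : PathIdx (N * l) => IsStarPath g α α' γ)).card ≤
        (3 * l) ^ (N * l) := by
  have hstep : ∀ {a b : Fin (N * l)}, g a b ≠ 0 → |siteOf l a - siteOf l b| ≤ 1 := by
    intro a b hg
    by_contra hc
    push_neg at hc
    exact hg (htri a b (by linarith))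
  constructor
  · -- part (a)
    intro γ hγ
    rw [Finset.mem_filter] at hγ
    obtain ⟨hp0, hplast, _, hnz⟩ := hγ.2
    set Δ : Fin γ.1.1 → ℤ := fun i => siteOf l (γ.2 i.succ) - siteOf l (γ.2 i.castSucc)
      with hΔdef
    have hΔ : ∀ i, |Δ i| ≤ 1 := by
      intro i
      rw [hΔdef]
      rw [abs_sub_comm]
      exact hstep (hnz i)
    have htel : ∑ i, Δ i = siteOf l α - siteOf l α' := by
      have h := tele γ.1.1 (fun i => siteOf l (γ.2 i))
      rw [hΔdef]
      rw [h, hplast]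
      congr 1
      rw [show (0 : Fin (γ.1.1 + 1)) = ⟨0, Nat.succ_pos _⟩ from rfl, hp0]
    have hsum : ∑ i, |Δ i| = (bval l γ : ℤ) := by
      rw [bval]
      rw [Finset.sum_congr rfl (fun i _ =>
        show |Δ i| = if |siteOf l (γ.2 i.castSucc) - siteOf l (γ.2 i.succ)| = 1
            then (1:ℤ) else 0 by
          have h1 := hΔ i
          have h2 : |Δ i| = |siteOf l (γ.2 i.castSucc) - siteOf l (γ.2 i.succ)| := by
            rw [hΔdef, abs_sub_comm]
          have h3 := abs_nonneg (Δ i)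
          rw [h2]
          rw [h2] at h1 h3
          split
          · assumption
          · omega)]
      rw [Finset.sum_boole]
    constructor
    · calc |siteOf l α - siteOf l α'| = |∑ i, Δ i| := by rw [htel]
        _ ≤ ∑ i, |Δ i| := Finset.abs_sum_le_sum_abs _ _
        _ = (bval l γ : ℤ) := hsum
    · have h1 : bval l γ ≤ γ.1.1 := by
        rw [bval]
        calc _ ≤ (Finset.univ : Finset (Fin γ.1.1)).card := Finset.card_filter_le _ _
          _ = γ.1.1 := by simp
      have h2 : γ.1.1 < N * l := γ.1.2
      have : bval l γ ≤ N * l := by omega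
      exact_mod_cast this
  · -- part (b)
    have h3l : 0 < 3 * l := by omega
    set enc : PathIdx (N * l) → Σ k : Fin (N * l), Fin k.1 → Fin (3 * l) :=
      fun γ => ⟨γ.1, fun i =>
        ⟨((γ.2 i.succ).1 + l - (γ.2 i.castSucc).1 / l * l) % (3 * l),
          Nat.mod_lt _ h3l⟩⟩ with henc
    have hinj : Set.InjOn enc
        (Finset.univ.filter fun γ : PathIdx (N * l) => IsStarPath g α α' γ) := by
      rintro ⟨⟨k, hk⟩, r⟩ hγ ⟨⟨k', hk'⟩, r'⟩ hγ' heq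
      simp only [Finset.coe_filter, Set.mem_setOf_eq] at hγ hγ'
      obtain ⟨hp0, hplast, _, hnz⟩ := hγ.2
      obtain ⟨hp0', hplast', _, hnz'⟩ := hγ'.2
      dsimp only at hp0 hplast hnz hp0' hplast' hnz'
      simp only [henc] at heq
      injection heq with h1 h2
      have hk0 : k = k' := congrArg Fin.val h1
      subst hk0
      have hfun := eq_of_heq h2
      have hcode : ∀ i : Fin k,
          ((r i.succ).1 + l - (r i.castSucc).1 / l * l) % (3 * l)
          = ((r' i.succ).1 + l - (r' i.castSucc).1 / l * l) % (3 * l) :=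
        fun i => congrArg Fin.val (congrFun hfun i)
      have main : ∀ n (hn : n < k + 1), r ⟨n, hn⟩ = r' ⟨n, hn⟩ := by
        intro n
        induction n with
        | zero => intro hn; rw [show (⟨0, hn⟩ : Fin (k+1)) = ⟨0, Nat.succ_pos _⟩ from rfl,
            hp0, hp0']
        | succ n ih =>
          intro hn
          have hnk : n < k := by omega
          set i : Fin k := ⟨n, hnk⟩ with hi
          have e1 : r i.castSucc = r' i.castSucc := ih (by omega)
          have hb := code_bounds hl (hstep (hnz i))
          have hb' := code_bounds hl (hstep (hnz' i))
          have hc := hcode i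
          rw [Nat.mod_eq_of_lt (by omega), Nat.mod_eq_of_lt (by omega)] at hc
          rw [e1] at hc hb
          have hval : (r i.succ).1 = (r' i.succ).1 := by omega
          have : r i.succ = r' i.succ := Fin.ext hval
          exact this
      have : r = r' := by
        funext j
        exact main j.1 j.2
      rw [this]
    calc (Finset.univ.filter fun γ : PathIdx (N * l) => IsStarPath g α α' γ).card
        ≤ (Finset.univ : Finset (Σ k : Fin (N * l), Fin k.1 → Fin (3 * l))).card := by
          apply Finset.card_le_card_of_injOn enc (fun γ _ => Finset.mem_univ _) hinj
      _ = ∑ k : Fin (N * l), (3 * l) ^ k.1 := by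
          rw [Finset.card_univ, Fintype.card_sigma]
          congr 1
          funext k
          rw [Fintype.card_fun]
          simp
      _ = ∑ k ∈ Finset.range (N * l), (3 * l) ^ k := by
          rw [Fin.sum_univ_eq_sum_range]
      _ ≤ (3 * l) ^ (N * l) := geom _ _ (by omega)
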